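/- Let d ≥ 1 be an integer and f_c(z) = z^{d+2} + c z^2 over ℤ[c], so that f_c'(z) = (d+2)z^{d+1} + 2cz. Then the following identity holds in ℤ[c, x]: Res_z(f_c(z) − z, x − f_c'(z)) = x · ((x − (d+2))^{d+1} + c·(−cd)^d·(x − 2)). (This is the explicit formula for the first multiplier polynomial δ_1(x) of f_c.) -/

import Mathlib

open Polynomial

/-- The resultant of two polynomials `f` and `g`, defined as the determinant of their
Sylvester matrix (rows of coefficients of `f` repeated `g.natDegree` times, followed by
rows of coefficients of `g` repeated `f.natDegree` times). -/
noncomputable def resultant {R : Type*} [CommRing R] (f g : Polynomial R) : R :=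
  Matrix.det (Matrix.of fun i j : Fin (g.natDegree + f.natDegree) =>
    if (i : ℕ) < g.natDegree then
      (if (i : ℕ) ≤ (j : ℕ) ∧ (j : ℕ) ≤ (i : ℕ) + f.natDegree then
        f.coeff (f.natDegree + (i : ℕ) - (j : ℕ)) else 0)
    else
      (if (i : ℕ) - g.natDegree ≤ (j : ℕ) ∧ (j : ℕ) ≤ ((i : ℕ) - g.natDegree) + g.natDegree then
        g.coeff (g.natDegree + ((i : ℕ) - g.natDegree) - (j : ℕ)) else 0))

/-- The `n`-fold compositional iterate of a polynomial: `polyIter f 0 = X`,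
`polyIter f (n+1) = (polyIter f n).comp f`. -/
noncomputable def polyIter {R : Type*} [CommSemiring R] (f : Polynomial R) : ℕ → Polynomial R
  | 0 => X
  | n + 1 => (polyIter f n).comp f

/-- `f_c(z) = z^{d+2} + c z²` as a polynomial in `z` over `ℤ[c][x]`
(innermost variable `c`, middle variable `x`, outer variable `z`). -/
noncomputable def fFam (d : ℕ) : Polynomial (Polynomial (Polynomial ℤ)) :=
  X ^ (d + 2) + C (C X) * X ^ 2


-- ===== auxiliary development =====
open Matrix in
lemma resultant_eq_det {R : Type*} [CommRing R] (f g : Polynomial R) {m n : ℕ}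
    (hf : f.natDegree = n) (hg : g.natDegree = m)
    (M : Matrix (Fin (m + n)) (Fin (m + n)) R)
    (hM : ∀ i j : Fin (m + n), M i j =
      if (i : ℕ) < m then
        (if (i : ℕ) ≤ (j : ℕ) ∧ (j : ℕ) ≤ (i : ℕ) + n then
          f.coeff (n + (i : ℕ) - (j : ℕ)) else 0)
      else
        (if (i : ℕ) - m ≤ (j : ℕ) ∧ (j : ℕ) ≤ ((i : ℕ) - m) + m then
          g.coeff (m + ((i : ℕ) - m) - (j : ℕ)) else 0)) :
    _root_.resultant f g = M.det := by
  subst hf; subst hg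
  unfold _root_.resultant
  congr 1
  funext i j
  rw [Matrix.of_apply, hM]

abbrev Rc : Type := Polynomial (Polynomial ℤ)

lemma Fcoeff (d : ℕ) (hd : 1 ≤ d) (k : ℕ) :
    (fFam d - X).coeff k =
      if k = d + 2 then 1 else if k = 2 then C X else if k = 1 then (-1 : Rc) else 0 := by
  simp only [fFam, coeff_sub, coeff_add, coeff_X_pow, coeff_C_mul, coeff_X]
  split_ifs <;> first | (exfalso; omega) | rfl | ring

lemma Fdeg (d : ℕ) (hd : 1 ≤ d) : (fFam d - X).natDegree = d + 2 := by
  apply le_antisymm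
  · rw [natDegree_le_iff_coeff_eq_zero]
    intro m hm
    rw [Fcoeff d hd, if_neg (by omega), if_neg (by omega), if_neg (by omega)]
  · apply le_natDegree_of_ne_zero
    rw [Fcoeff d hd, if_pos rfl]
    exact one_ne_zero

lemma deriv_fFam (d : ℕ) :
    derivative (fFam d) = C ((d : Rc) + 2) * X ^ (d + 1) + C (2 * C X) * X := by
  simp only [fFam, derivative_add, derivative_X_pow, derivative_C_mul, C_mul]
  push_cast
  ring

lemma Gcoeff (d : ℕ) (hd : 1 ≤ d) (k : ℕ) :
    (C X - derivative (fFam d)).coeff k =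
      if k = d + 1 then -((d : Rc) + 2) else if k = 1 then -(2 * C X)
        else if k = 0 then X else 0 := by
  rw [deriv_fFam]
  simp only [coeff_sub, coeff_add, coeff_C_mul, coeff_X_pow, coeff_X, coeff_C]
  split_ifs <;> first | (exfalso; omega) | rfl | ring

lemma Gdeg (d : ℕ) (hd : 1 ≤ d) : (C X - derivative (fFam d)).natDegree = d + 1 := by
  apply le_antisymm
  · rw [natDegree_le_iff_coeff_eq_zero]
    intro m hm
    rw [Gcoeff d hd, if_neg (by omega), if_neg (by omega), if_neg (by omega)]
  · apply le_natDegree_of_ne_zero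
    rw [Gcoeff d hd, if_pos rfl]
    rw [neg_ne_zero]
    have : ((d : Rc) + 2) = ((d + 2 : ℕ) : Rc) := by push_cast; ring
    rw [this]
    exact Nat.cast_ne_zero.mpr (by omega)

noncomputable def Smat (d : ℕ) : Matrix (Fin (d+1+(d+2))) (Fin (d+1+(d+2))) Rc :=
  Matrix.of fun i j =>
  if (i:ℕ) < d+1 then
    (if (j:ℕ) = i then 1 else if (j:ℕ) = (i:ℕ)+d then C X
      else if (j:ℕ) = (i:ℕ)+d+1 then (-1:Rc) else 0)
  else
    (if (j:ℕ) = (i:ℕ)-(d+1) then -((d:Rc)+2) else if (j:ℕ) = (i:ℕ)-1 then -(2*C X)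
      else if (j:ℕ) = (i:ℕ) then X else 0)

noncomputable def Lmat (d : ℕ) : Matrix (Fin (d+1+(d+2))) (Fin (d+1+(d+2))) Rc :=
  Matrix.of fun i j =>
  (if i = j then (1:Rc) else 0) + (if (i:ℕ) = (j:ℕ)+(d+1) ∧ (j:ℕ) ≤ d then ((d:Rc)+2) else 0)

noncomputable def Pmat (d : ℕ) : Matrix (Fin (d+1+(d+2))) (Fin (d+1+(d+2))) Rc :=
  Matrix.of fun i j =>
  if (i:ℕ) < d+1 then
    (if (j:ℕ) = i then 1 else if (j:ℕ) = (i:ℕ)+d then C X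
      else if (j:ℕ) = (i:ℕ)+d+1 then (-1:Rc) else 0)
  else if (i:ℕ) < 2*d+2 then
    (if (j:ℕ)+1 = (i:ℕ) then C X * (d:Rc) else if (j:ℕ) = (i:ℕ) then X - ((d:Rc)+2) else 0)
  else
    (if (j:ℕ) = d+1 then -((d:Rc)+2) else if (j:ℕ) = 2*d+1 then -(2*C X)
      else if (j:ℕ) = 2*d+2 then X else 0)

noncomputable def Tmat (d : ℕ) : Matrix (Fin (d+3)) (Fin (d+3)) Rc :=
  Matrix.of fun r k =>
  if (r:ℕ) = 0 then
    (if (k:ℕ) = 0 then 1 else if (k:ℕ) = d then C X else if (k:ℕ) = d+1 then (-1:Rc) else 0)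
  else if (r:ℕ) < d+2 then
    (if (k:ℕ)+1 = (r:ℕ) then C X * (d:Rc) else if (k:ℕ) = (r:ℕ) then X - ((d:Rc)+2) else 0)
  else
    (if (k:ℕ) = 1 then -((d:Rc)+2) else if (k:ℕ) = d+1 then -(2*C X)
      else if (k:ℕ) = d+2 then X else 0)

noncomputable def Umat (d : ℕ) : Matrix (Fin (d+2)) (Fin (d+2)) Rc :=
  Matrix.of fun r k =>
  if (r:ℕ) = 0 then
    (if (k:ℕ) = 0 then 1 else if (k:ℕ) = d then C X else if (k:ℕ) = d+1 then (-1:Rc) else 0)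
  else
    (if (k:ℕ)+1 = (r:ℕ) then C X * (d:Rc) else if (k:ℕ) = (r:ℕ) then X - ((d:Rc)+2) else 0)

set_option maxHeartbeats 2000000 in
lemma res_eq_Smat (d : ℕ) (hd : 1 ≤ d) :
    _root_.resultant (fFam d - X) (C X - derivative (fFam d)) = (Smat d).det := by
  apply resultant_eq_det _ _ (Fdeg d hd) (Gdeg d hd)
  intro i j
  have hi := i.isLt
  have hj := j.isLt
  simp only [Smat, Matrix.of_apply]
  rw [Fcoeff d hd, Gcoeff d hd]
  split_ifs <;> first | rfl | (exfalso; omega) | exact False.elim (by assumption)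

lemma det_Lmat (d : ℕ) : (Lmat d).det = 1 := by
  rw [Matrix.det_of_lowerTriangular (Lmat d) ?h]
  · apply Finset.prod_eq_one
    intro i _
    have h2 : ¬((i:ℕ) = (i:ℕ)+(d+1) ∧ (i:ℕ) ≤ d) := by omega
    simp [Lmat, h2]
  · intro i j hij
    have hlt : (i:ℕ) < (j:ℕ) := hij
    have h1 : ¬(i = j) := by intro h; rw [h] at hlt; omega
    have h2 : ¬((i:ℕ) = (j:ℕ)+(d+1) ∧ (j:ℕ) ≤ d) := by omega
    simp [Lmat, h1, h2]

set_option maxHeartbeats 2000000 in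
lemma LS (d : ℕ) (hd : 1 ≤ d) : Lmat d * Smat d = Pmat d := by
  funext i j
  rw [Matrix.mul_apply]
  have expand : ∀ k : Fin (d+1+(d+2)), Lmat d i k * Smat d k j =
      (if i = k then (1:Rc) else 0) * Smat d k j
      + (if (i:ℕ) = (k:ℕ)+(d+1) ∧ (k:ℕ) ≤ d then ((d:Rc)+2) else 0) * Smat d k j := by
    intro k
    simp only [Lmat, Matrix.of_apply]
    ring
  rw [Finset.sum_congr rfl (fun k _ => expand k), Finset.sum_add_distrib]
  have first : (∑ k, (if i = k then (1:Rc) else 0) * Smat d k j) = Smat d i j := by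
    simp [ite_mul]
  rw [first]
  by_cases hi : d+1 ≤ (i:ℕ) ∧ (i:ℕ) ≤ 2*d+1
  · have hlt : (i:ℕ)-(d+1) < d+1+(d+2) := by omega
    have hcond : ∀ k : Fin (d+1+(d+2)),
        ((i:ℕ) = (k:ℕ)+(d+1) ∧ (k:ℕ) ≤ d) = ((⟨(i:ℕ)-(d+1), hlt⟩ : Fin (d+1+(d+2))) = k) := by
      intro k
      apply propext
      constructor
      · rintro ⟨h1, h2⟩; apply Fin.ext; simp; omega
      · rintro rfl; simp; omega
    simp_rw [hcond]
    simp only [ite_mul, zero_mul, Finset.sum_ite_eq, Finset.mem_univ, if_true]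
    have hij := j.isLt
    simp only [Smat, Pmat, Matrix.of_apply]
    split_ifs <;> first | (exfalso; omega) | rfl | ring
  · have hzero : ∀ k : Fin (d+1+(d+2)),
        (if (i:ℕ) = (k:ℕ)+(d+1) ∧ (k:ℕ) ≤ d then ((d:Rc)+2) else 0) * Smat d k j = 0 := by
      intro k
      have : ¬((i:ℕ) = (k:ℕ)+(d+1) ∧ (k:ℕ) ≤ d) := by
        have := k.isLt
        omega
      rw [if_neg this]
      ring
    rw [Finset.sum_congr rfl (fun k _ => hzero k), Finset.sum_const_zero, add_zero]
    have hi3 := i.isLt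
    simp only [Smat, Pmat, Matrix.of_apply]
    split_ifs <;> first | (exfalso; omega) | rfl

set_option maxHeartbeats 1000000 in
lemma det_P_eq_det_T (d : ℕ) (hd : 1 ≤ d) : (Pmat d).det = (Tmat d).det := by
  have h : d + (d+3) = d+1+(d+2) := by omega
  set e : Fin d ⊕ Fin (d+3) ≃ Fin (d+1+(d+2)) := finSumFinEquiv.trans (finCongr h) with he
  have hl : ∀ i : Fin d, ((e (Sum.inl i)):ℕ) = (i:ℕ) := by
    intro i; simp [he]
  have hr : ∀ r : Fin (d+3), ((e (Sum.inr r)):ℕ) = d + (r:ℕ) := by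
    intro r; simp [he]
  rw [← Matrix.det_submatrix_equiv_self e (Pmat d)]
  have hblock : (Pmat d).submatrix e e =
      Matrix.fromBlocks 1
        (Matrix.of fun i j => (Pmat d) (e (Sum.inl i)) (e (Sum.inr j)))
        0 (Tmat d) := by
    funext i j
    rcases i with i | r <;> rcases j with j | k
    · simp only [Matrix.submatrix_apply, Matrix.fromBlocks_apply₁₁, Matrix.one_apply,
        Fin.ext_iff, Pmat, Matrix.of_apply, hl]
      have hi := i.isLt
      have hj := j.isLt
      split_ifs <;> first | (exfalso; omega) | rfl | exact False.elim (by assumption)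
    · rfl
    · simp only [Matrix.submatrix_apply, Matrix.fromBlocks_apply₂₁, Pmat, Matrix.of_apply,
        hl, hr, Matrix.zero_apply]
      have hj := j.isLt
      have hrr := r.isLt
      split_ifs <;> first | (exfalso; omega) | rfl | exact False.elim (by assumption)
    · simp only [Matrix.submatrix_apply, Matrix.fromBlocks_apply₂₂, Pmat, Tmat,
        Matrix.of_apply, hl, hr]
      have hk := k.isLt
      have hrr := r.isLt
      split_ifs <;> first | (exfalso; omega) | rfl | exact False.elim (by assumption)
  rw [hblock, Matrix.det_fromBlocks_zero₂₁, Matrix.det_one, one_mul]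

set_option maxHeartbeats 1000000 in
lemma det_T_eq (d : ℕ) (hd : 1 ≤ d) : (Tmat d).det = (Umat d).det * X := by
  set e : Fin (d+2) ⊕ Fin 1 ≃ Fin (d+3) := (finSumFinEquiv : Fin (d+2) ⊕ Fin 1 ≃ Fin (d+2+1))
    with he
  have hl : ∀ i : Fin (d+2), ((e (Sum.inl i)):ℕ) = (i:ℕ) := by
    intro i; simp [he]
  have hr : ∀ r : Fin 1, ((e (Sum.inr r)):ℕ) = d + 2 := by
    intro r; simp [he]
  rw [← Matrix.det_submatrix_equiv_self e (Tmat d)]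
  have hblock : (Tmat d).submatrix e e =
      Matrix.fromBlocks (Umat d) 0
        (Matrix.of fun i j => (Tmat d) (e (Sum.inr i)) (e (Sum.inl j)))
        (Matrix.of fun _ _ => (X : Rc)) := by
    funext i j
    rcases i with i | r <;> rcases j with j | k
    · simp only [Matrix.submatrix_apply, Matrix.fromBlocks_apply₁₁, Tmat, Umat,
        Matrix.of_apply, hl]
      have hi := i.isLt
      have hj := j.isLt
      split_ifs <;> first | (exfalso; omega) | rfl | exact False.elim (by assumption)
    · simp only [Matrix.submatrix_apply, Matrix.fromBlocks_apply₁₂, Tmat,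
        Matrix.of_apply, hl, hr, Matrix.zero_apply]
      have hi := i.isLt
      split_ifs <;> first | (exfalso; omega) | rfl | exact False.elim (by assumption)
    · rfl
    · simp only [Matrix.submatrix_apply, Matrix.fromBlocks_apply₂₂, Tmat,
        Matrix.of_apply, hl, hr]
      split_ifs <;> first | (exfalso; omega) | rfl | exact False.elim (by assumption)
  rw [hblock, Matrix.det_fromBlocks_zero₁₂, Matrix.det_fin_one]
  rfl

lemma hrho (d : ℕ) : ∀ i : Fin (d+2), ((finRotate (d+2)) i : ℕ) =
    if (i:ℕ) = d+1 then 0 else (i:ℕ)+1 := by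
  intro i
  rw [finRotate_succ_apply, Fin.val_add_one]
  simp [Fin.ext_iff]

lemma htau (d : ℕ) : ∀ j : Fin (d+2),
    ((Equiv.swap (⟨d, by omega⟩ : Fin (d+2)) ⟨d+1, by omega⟩) j : ℕ) =
      if (j:ℕ) = d then d+1 else if (j:ℕ) = d+1 then d else (j:ℕ) := by
  intro j
  rw [Equiv.swap_apply_def]
  split_ifs with h1 h2 h3 h4 h5 <;>
    first
      | rfl
      | (exfalso; rw [Fin.ext_iff] at *; simp_all; omega)
      | (rw [Fin.ext_iff] at *; simp_all)

lemma detD1 (d : ℕ) (hd : 1 ≤ d) :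
    ((Umat d).updateRow 0 (Pi.single 0 (1:Rc))).det = (X - ((d:Rc)+2))^(d+1) := by
  rw [Matrix.det_of_lowerTriangular _ ?ht]
  case ht =>
    intro i j hij
    have hij' : (i:ℕ) < (j:ℕ) := hij
    have hj := j.isLt
    simp only [Matrix.updateRow_apply, Umat, Matrix.of_apply, Pi.single_apply, Fin.ext_iff,
      Fin.val_zero]
    split_ifs <;> first | (exfalso; omega) | rfl | exact False.elim (by assumption)
  rw [Fin.prod_univ_succ]
  have h0 : ((Umat d).updateRow 0 (Pi.single 0 (1:Rc))) 0 0 = 1 := by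
    simp
  rw [h0, one_mul]
  have hs : ∀ i : Fin (d+1),
      ((Umat d).updateRow 0 (Pi.single 0 (1:Rc))) i.succ i.succ = X - ((d:Rc)+2) := by
    intro i
    rw [Matrix.updateRow_ne (Fin.succ_ne_zero i)]
    simp only [Umat, Matrix.of_apply, Fin.val_succ]
    rw [if_neg (by omega), if_neg (by omega)]; simp
  calc (∏ i : Fin (d+1), ((Umat d).updateRow 0 (Pi.single 0 (1:Rc))) i.succ i.succ)
      = ∏ _i : Fin (d+1), (X - ((d:Rc)+2)) := Finset.prod_congr rfl (fun i _ => hs i)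
    _ = (X - ((d:Rc)+2))^(d+1) := by
        rw [Finset.prod_const, Finset.card_univ, Fintype.card_fin]
set_option maxHeartbeats 1000000 in
lemma detD2 (d : ℕ) (hd : 1 ≤ d) :
    ((Umat d).updateRow 0 (Pi.single (⟨d, by omega⟩ : Fin (d+2)) (C X : Rc))).det
      = (-1:Rc)^d * C X * (X - ((d:Rc)+2)) * (C X * (d:Rc))^d := by
  set D2 := (Umat d).updateRow 0 (Pi.single (⟨d, by omega⟩ : Fin (d+2)) (C X : Rc)) with hD2
  set τ : Equiv.Perm (Fin (d+2)) := Equiv.swap (⟨d, by omega⟩ : Fin (d+2)) ⟨d+1, by omega⟩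
    with hτdef
  set W := (D2.submatrix (finRotate (d+2)) id).submatrix id τ with hW
  have hWentry : ∀ i j : Fin (d+2), W i j =
      (if ((finRotate (d+2)) i : ℕ) = 0 then
        (if ((τ j : Fin (d+2)):ℕ) = d then (C X : Rc) else 0)
      else
        (if ((τ j : Fin (d+2)):ℕ)+1 = ((finRotate (d+2)) i : ℕ) then C X * (d:Rc)
          else if ((τ j : Fin (d+2)):ℕ) = ((finRotate (d+2)) i : ℕ) then X - ((d:Rc)+2)
          else 0)) := by
    intro i j
    simp only [hW, Matrix.submatrix_apply, id_eq, hD2, Matrix.updateRow_apply, Umat,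
      Matrix.of_apply, Pi.single_apply, Fin.ext_iff, Fin.val_zero]
    split_ifs <;> first | rfl | (exfalso; omega)
  have hdet : W.det = (C X * (d:Rc))^d * (X - ((d:Rc)+2)) * C X := by
    rw [Matrix.det_of_upperTriangular ?ht]
    case ht =>
      intro i j hij
      have hij' : (j:ℕ) < (i:ℕ) := hij
      have hi := i.isLt
      have hj := j.isLt
      rw [hWentry i j, hrho d i, htau d j]
      split_ifs <;> first | rfl | (exfalso; omega)
    rw [Fin.prod_univ_castSucc, Fin.prod_univ_castSucc]
    have hlast : W (Fin.last (d+1)) (Fin.last (d+1)) = C X := by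
      rw [hWentry, hrho, htau]
      simp only [Fin.val_last]
      split_ifs <;> first | rfl | (exfalso; omega)
    have hmid : W ((Fin.last d).castSucc) ((Fin.last d).castSucc) = X - ((d:Rc)+2) := by
      rw [hWentry, hrho, htau]
      simp only [Fin.coe_castSucc, Fin.val_last]
      split_ifs <;> first | rfl | (exfalso; omega) | exact False.elim (by assumption)
    have hsmall : ∀ i : Fin d, W (i.castSucc.castSucc) (i.castSucc.castSucc) = C X * (d:Rc) := by
      intro i
      have hi := i.isLt
      rw [hWentry, hrho, htau]
      simp only [Fin.coe_castSucc]
      split_ifs <;> first | rfl | (exfalso; omega) | exact False.elim (by assumption)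
    rw [hlast, hmid]
    congr 1
    congr 1
    calc (∏ i : Fin d, W (i.castSucc.castSucc) (i.castSucc.castSucc))
        = ∏ _i : Fin d, (C X * (d:Rc)) := Finset.prod_congr rfl (fun i _ => hsmall i)
      _ = (C X * (d:Rc))^d := by rw [Finset.prod_const, Finset.card_univ, Fintype.card_fin]
  have h1 := Matrix.det_permute (finRotate (d+2)) D2
  have h2 := Matrix.det_permute' τ (D2.submatrix (finRotate (d+2)) id)
  rw [sign_finRotate] at h1
  have hne : (⟨d, by omega⟩ : Fin (d+2)) ≠ ⟨d+1, by omega⟩ := by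
    simp [Fin.ext_iff]
  rw [hτdef, Equiv.Perm.sign_swap hne] at h2
  rw [← hτdef, ← hW] at h2
  simp only [Units.val_pow_eq_pow_val, Units.val_neg, Units.val_one, Int.cast_pow,
    Int.cast_neg, Int.cast_one] at h1 h2
  have hpow : (-1:Rc)^(d+1) * (-1:Rc)^(d+1) = 1 := by
    rw [← mul_pow]; norm_num
  calc D2.det = ((-1:Rc)^(d+1) * (-1:Rc)^(d+1)) * D2.det := by rw [hpow, one_mul]
    _ = (-1:Rc)^(d+1) * (D2.submatrix (finRotate (d+2)) id).det := by
        rw [mul_assoc, h1, show d + 2 - 1 = d + 1 by omega]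
    _ = (-1:Rc)^(d+1) * (-1 * W.det) := by
        rw [h2]
        ring
    _ = (-1:Rc)^(d+1) * (-1 * ((C X * (d:Rc))^d * (X - ((d:Rc)+2)) * C X)) := by rw [hdet]
    _ = (-1:Rc)^d * C X * (X - ((d:Rc)+2)) * (C X * (d:Rc))^d := by
        rw [pow_succ]
        generalize (-1:Rc)^d = s
        ring

lemma detD3 (d : ℕ) (hd : 1 ≤ d) :
    ((Umat d).updateRow 0 (Pi.single (⟨d+1, by omega⟩ : Fin (d+2)) (-1 : Rc))).det
      = (-1:Rc)^d * (C X * (d:Rc))^(d+1) := by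
  set D3 := (Umat d).updateRow 0 (Pi.single (⟨d+1, by omega⟩ : Fin (d+2)) (-1 : Rc)) with hD3
  set W := D3.submatrix (finRotate (d+2)) id with hW
  have hWentry : ∀ i j : Fin (d+2), W i j =
      (if ((finRotate (d+2)) i : ℕ) = 0 then
        (if (j:ℕ) = d+1 then (-1 : Rc) else 0)
      else
        (if (j:ℕ)+1 = ((finRotate (d+2)) i : ℕ) then C X * (d:Rc)
          else if (j:ℕ) = ((finRotate (d+2)) i : ℕ) then X - ((d:Rc)+2)
          else 0)) := by
    intro i j
    simp only [hW, Matrix.submatrix_apply, id_eq, hD3, Matrix.updateRow_apply, Umat,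
      Matrix.of_apply, Pi.single_apply, Fin.ext_iff, Fin.val_zero]
    split_ifs <;> first | rfl | (exfalso; omega)
  have hdet : W.det = (C X * (d:Rc))^(d+1) * (-1 : Rc) := by
    rw [Matrix.det_of_upperTriangular ?ht]
    case ht =>
      intro i j hij
      have hij' : (j:ℕ) < (i:ℕ) := hij
      have hi := i.isLt
      have hj := j.isLt
      rw [hWentry i j, hrho d i]
      split_ifs <;> first | rfl | (exfalso; omega)
    rw [Fin.prod_univ_castSucc]
    have hlast : W (Fin.last (d+1)) (Fin.last (d+1)) = (-1 : Rc) := by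
      rw [hWentry, hrho]
      simp only [Fin.val_last]
      split_ifs <;> first | rfl | (exfalso; omega)
    have hsmall : ∀ i : Fin (d+1), W (i.castSucc) (i.castSucc) = C X * (d:Rc) := by
      intro i
      have hi := i.isLt
      rw [hWentry, hrho]
      simp only [Fin.coe_castSucc]
      split_ifs <;> first | rfl | (exfalso; omega) | exact False.elim (by assumption)
    rw [hlast]
    congr 1
    calc (∏ i : Fin (d+1), W (i.castSucc) (i.castSucc))
        = ∏ _i : Fin (d+1), (C X * (d:Rc)) := Finset.prod_congr rfl (fun i _ => hsmall i)
      _ = (C X * (d:Rc))^(d+1) := by rw [Finset.prod_const, Finset.card_univ, Fintype.card_fin]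
  have h1 := Matrix.det_permute (finRotate (d+2)) D3
  rw [sign_finRotate] at h1
  rw [← hW] at h1
  simp only [Units.val_pow_eq_pow_val, Units.val_neg, Units.val_one, Int.cast_pow,
    Int.cast_neg, Int.cast_one] at h1
  have hpow : (-1:Rc)^(d+1) * (-1:Rc)^(d+1) = 1 := by
    rw [← mul_pow]; norm_num
  calc D3.det = ((-1:Rc)^(d+1) * (-1:Rc)^(d+1)) * D3.det := by rw [hpow, one_mul]
    _ = (-1:Rc)^(d+1) * W.det := by rw [mul_assoc, h1, show d + 2 - 1 = d + 1 by omega]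
    _ = (-1:Rc)^(d+1) * ((C X * (d:Rc))^(d+1) * (-1 : Rc)) := by rw [hdet]
    _ = (-1:Rc)^d * (C X * (d:Rc))^(d+1) := by
        rw [pow_succ]
        generalize (-1:Rc)^d = s
        ring

lemma det_Umat (d : ℕ) (hd : 1 ≤ d) :
    (Umat d).det = (X - ((d:Rc)+2))^(d+1)
      + (-1:Rc)^d * C X * (X - ((d:Rc)+2)) * (C X * (d:Rc))^d
      + (-1:Rc)^d * (C X * (d:Rc))^(d+1) := by
  have hrow : Umat d 0 = Pi.single (0 : Fin (d+2)) (1:Rc)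
      + Pi.single (⟨d, by omega⟩ : Fin (d+2)) (C X : Rc)
      + Pi.single (⟨d+1, by omega⟩ : Fin (d+2)) (-1 : Rc) := by
    funext k
    have hk := k.isLt
    simp only [Umat, Matrix.of_apply, Pi.add_apply, Pi.single_apply, Fin.ext_iff, Fin.val_zero]
    split_ifs <;> first | (exfalso; omega) | ring | exact False.elim (by assumption)
  have hupd : Umat d = (Umat d).updateRow 0 (Pi.single (0 : Fin (d+2)) (1:Rc)
      + Pi.single (⟨d, by omega⟩ : Fin (d+2)) (C X : Rc)
      + Pi.single (⟨d+1, by omega⟩ : Fin (d+2)) (-1 : Rc)) := by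
    rw [← hrow, Matrix.updateRow_eq_self]
  conv_lhs => rw [hupd]
  rw [Matrix.det_updateRow_add, Matrix.det_updateRow_add,
    detD1 d hd, detD2 d hd, detD3 d hd]

theorem first_multiplier_polynomial_formula' (d : ℕ) (hd : 1 ≤ d) :
    _root_.resultant (fFam d - X) (C X - derivative (fFam d))
      = (X : Polynomial (Polynomial ℤ)) *
          ((X - ((d : Polynomial (Polynomial ℤ)) + 2)) ^ (d + 1) +
            C X * (-(C X * (d : Polynomial (Polynomial ℤ)))) ^ d *
              (X - 2)) := by
  rw [res_eq_Smat d hd]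
  have h1 : (Smat d).det = (Pmat d).det := by
    rw [← LS d hd, Matrix.det_mul, det_Lmat, one_mul]
  rw [h1, det_P_eq_det_T d hd, det_T_eq d hd, det_Umat d hd]
  have hneg : (-(C X * (d : Rc)))^d = (-1:Rc)^d * (C X * (d:Rc))^d := by
    rw [show -(C X * (d:Rc)) = (-1) * (C X * (d:Rc)) by ring, mul_pow]
  rw [hneg, pow_succ (C X * (d:Rc)) d, pow_succ (X - ((d:Rc)+2)) d]
  generalize (-1:Rc)^d = s
  generalize (C X * (d:Rc))^d = t
  generalize (X - ((d:Rc)+2))^d = w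
  push_cast
  ring

/-- Explicit formula for the first multiplier polynomial of `f_c(z) = z^{d+2} + cz²`:
`Res_z(f_c(z) − z, x − f_c'(z)) = x·((x − (d+2))^{d+1} + c(−cd)^d (x − 2))` in `ℤ[c][x]`,
where `x = X` and `c = C X` in `ℤ[c][x]`. -/
theorem first_multiplier_polynomial_formula (d : ℕ) (hd : 1 ≤ d) :
    _root_.resultant (fFam d - X) (C X - derivative (fFam d))
      = (X : Polynomial (Polynomial ℤ)) *
          ((X - ((d : Polynomial (Polynomial ℤ)) + 2)) ^ (d + 1) +
            C X * (-(C X * (d : Polynomial (Polynomial ℤ)))) ^ d *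
              (X - 2)) :=
  first_multiplier_polynomial_formula' d hd
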